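/- Define a_n = 1/4 + (-1)^n / (4(4n² - 1)) and g_n = (2n² - 1/4 + (-1)^n/4)/(2n+1)². Then g_n(1 - g_{n-1}) = a_n for all n ≥ 1, and 0 ≤ g_n ≤ 1 for all n ≥ 0; hence {a_n} is a chain sequence. -/

import Mathlib

theorem stmt_11 (a g : ℕ → ℝ)
    (ha : ∀ n, a n = 1/4 + (-1 : ℝ)^n / (4 * (4 * (n : ℝ)^2 - 1)))
    (hg : ∀ n, g n = (2 * (n : ℝ)^2 - 1/4 + (-1 : ℝ)^n / 4) / (2 * (n : ℝ) + 1)^2) :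
    (∀ n ≥ 1, g n * (1 - g (n - 1)) = a n) ∧ ∀ n, 0 ≤ g n ∧ g n ≤ 1 := by
  constructor
  · rintro n hn
    obtain ⟨m, rfl⟩ := Nat.exists_eq_add_of_le hn
    simp only [Nat.add_sub_cancel_left]
    rw [ha, hg, hg]
    have hk0 : (0 : ℝ) ≤ (m : ℝ) := Nat.cast_nonneg m
    have h1 : (2 * ((1 + m : ℕ) : ℝ) + 1) ≠ 0 := by push_cast; nlinarith
    have h2 : (2 * ((m : ℕ) : ℝ) + 1) ≠ 0 := by nlinarith
    have h3 : (4 * ((1 + m : ℕ) : ℝ)^2 - 1) ≠ 0 := by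
      push_cast; nlinarith [sq_nonneg ((m:ℝ))]
    rcases Nat.even_or_odd m with hm | hm
    · have e2 : ((-1 : ℝ))^m = 1 := hm.neg_one_pow
      have e1 : ((-1 : ℝ))^(1 + m) = -1 := by
        have : Odd (1 + m) := by
          obtain ⟨k, rfl⟩ := hm; exact ⟨k, by ring⟩
        exact this.neg_one_pow
      rw [e1, e2]
      push_cast at h1 h2 h3 ⊢
      rw [div_add_div _ _ (by norm_num) (mul_ne_zero (by norm_num) h3), eq_div_iff (mul_ne_zero (by norm_num) (mul_ne_zero (by norm_num) h3))]
      field_simp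
      ring
    · have e2 : ((-1 : ℝ))^m = -1 := hm.neg_one_pow
      have e1 : ((-1 : ℝ))^(1 + m) = 1 := by
        have : Even (1 + m) := by
          obtain ⟨k, rfl⟩ := hm; exact ⟨k + 1, by ring⟩
        exact this.neg_one_pow
      rw [e1, e2]
      push_cast at h1 h2 h3 ⊢
      rw [div_add_div _ _ (by norm_num) (mul_ne_zero (by norm_num) h3), eq_div_iff (mul_ne_zero (by norm_num) (mul_ne_zero (by norm_num) h3))]
      field_simp
      ring
  · intro n
    rw [hg]
    have hd : (0 : ℝ) < (2 * (n : ℝ) + 1)^2 := by positivity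
    rcases Nat.even_or_odd n with hn | hn
    · rw [hn.neg_one_pow]
      constructor
      · apply div_nonneg _ hd.le
        nlinarith [sq_nonneg ((n:ℝ))]
      · rw [div_le_one hd]
        nlinarith [Nat.cast_nonneg (α := ℝ) n]
    · obtain ⟨k, rfl⟩ := hn
      rw [Odd.neg_one_pow ⟨k, rfl⟩]
      have hk : (0 : ℝ) ≤ (k : ℝ) := Nat.cast_nonneg k
      constructor
      · apply div_nonneg _ hd.le
        push_cast
        nlinarith [sq_nonneg ((k:ℝ))]
      · rw [div_le_one hd]
        push_cast
        nlinarith [sq_nonneg ((k:ℝ))]
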